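/- Let M ∈ ℝ^{n×n} be an arbitrary square matrix, D ∈ ℝ^{n×n} symmetric positive definite, and Y ∈ ℝ^{n×n} symmetric positive semidefinite such that −Y·Mᵀ − M·Y − Y·D·Y ⪰ 0. Then ‖Y‖ ≤ 2‖M‖ / λmin(D). -/

import Mathlib

open Matrix MeasureTheory

/-- Spectral (ℓ² operator) norm of a real matrix. -/
noncomputable def specNorm {p q : Type*} [Fintype p] [Fintype q] [DecidableEq q]
    (M : Matrix p q ℝ) : ℝ :=
  ‖LinearMap.toContinuousLinearMap (Matrix.toEuclideanLin M)‖

/-- A real square matrix is Hurwitz if all of its eigenvalues over ℂ have negative real part. -/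
def IsHurwitz {k : Type*} [Fintype k] [DecidableEq k] (M : Matrix k k ℝ) : Prop :=
  ∀ μ ∈ spectrum ℂ (M.map (Complex.ofReal ·)), μ.re < 0

/-- Smallest (real) eigenvalue of a real matrix. -/
noncomputable def lamMin {k : Type*} [Fintype k] [DecidableEq k] (X : Matrix k k ℝ) : ℝ :=
  sInf (spectrum ℝ X)

/-- Largest (real) eigenvalue of a real matrix. -/
noncomputable def lamMax {k : Type*} [Fintype k] [DecidableEq k] (X : Matrix k k ℝ) : ℝ :=
  sSup (spectrum ℝ X)

open scoped Matrix.Norms.L2Operator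

namespace Stmt8Aux

variable {n : ℕ}

lemma specNorm_eq_norm' (A : Matrix (Fin n) (Fin n) ℝ) : specNorm A = ‖A‖ := rfl

lemma toEuclideanLin_eigenvectorBasis (A : Matrix (Fin n) (Fin n) ℝ) (hA : A.IsHermitian)
    (j : Fin n) :
    toEuclideanLin A (hA.eigenvectorBasis j) = hA.eigenvalues j • hA.eigenvectorBasis j := by
  apply (WithLp.equiv 2 _).injective
  simp [toEuclideanLin_apply, hA.mulVec_eigenvectorBasis]

lemma inner_expand (A : Matrix (Fin n) (Fin n) ℝ) (hA : A.IsHermitian)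
    (x : EuclideanSpace ℝ (Fin n)) :
    (inner ℝ x (toEuclideanLin A x) : ℝ)
      = ∑ j, hA.eigenvalues j * (hA.eigenvectorBasis.repr x j)^2 := by
  set b := hA.eigenvectorBasis
  have hsym := (Matrix.isHermitian_iff_isSymmetric.1 hA)
  rw [← b.sum_inner_mul_inner x (toEuclideanLin A x)]
  congr 1; ext j
  rw [show (inner ℝ (b j) (toEuclideanLin A x) : ℝ) = inner ℝ (toEuclideanLin A (b j)) x from
    (hsym _ _).symm, toEuclideanLin_eigenvectorBasis A hA j]
  rw [real_inner_smul_left]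
  have h1 : (inner ℝ x (b j) : ℝ) = b.repr x j := by
    rw [real_inner_comm]; exact (b.repr_apply_apply x j).symm
  have h2 : (inner ℝ (b j) x : ℝ) = b.repr x j := (b.repr_apply_apply x j).symm
  rw [h1, h2]; ring

lemma normsq_expand (A : Matrix (Fin n) (Fin n) ℝ) (hA : A.IsHermitian)
    (x : EuclideanSpace ℝ (Fin n)) :
    ‖x‖^2 = ∑ j, (hA.eigenvectorBasis.repr x j)^2 := by
  set b := hA.eigenvectorBasis
  rw [← real_inner_self_eq_norm_sq, ← b.sum_inner_mul_inner x x]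
  congr 1; ext j
  have h1 : (inner ℝ x (b j) : ℝ) = b.repr x j := by
    rw [real_inner_comm]; exact (b.repr_apply_apply x j).symm
  have h2 : (inner ℝ (b j) x : ℝ) = b.repr x j := (b.repr_apply_apply x j).symm
  rw [h1, h2]; ring

lemma normTxsq_expand (A : Matrix (Fin n) (Fin n) ℝ) (hA : A.IsHermitian)
    (x : EuclideanSpace ℝ (Fin n)) :
    ‖toEuclideanLin A x‖^2 = ∑ j, (hA.eigenvalues j)^2 * (hA.eigenvectorBasis.repr x j)^2 := by
  set b := hA.eigenvectorBasis
  have hsym := (Matrix.isHermitian_iff_isSymmetric.1 hA)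
  rw [← real_inner_self_eq_norm_sq,
    ← b.sum_inner_mul_inner (toEuclideanLin A x) (toEuclideanLin A x)]
  congr 1; ext j
  have key : (inner ℝ (b j) (toEuclideanLin A x) : ℝ) = hA.eigenvalues j * b.repr x j := by
    rw [show (inner ℝ (b j) (toEuclideanLin A x) : ℝ) = inner ℝ (toEuclideanLin A (b j)) x from
      (hsym _ _).symm, toEuclideanLin_eigenvectorBasis A hA j, real_inner_smul_left,
      (b.repr_apply_apply x j)]
  have key2 : (inner ℝ (toEuclideanLin A x) (b j) : ℝ) = hA.eigenvalues j * b.repr x j := by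
    rw [real_inner_comm]; exact key
  rw [key, key2]; ring

lemma norm_le_of_psd (Y : Matrix (Fin n) (Fin n) ℝ) (hY : Y.PosSemidef) (lam : ℝ)
    (hlam0 : 0 ≤ lam) (hmax : ∀ j, hY.1.eigenvalues j ≤ lam) : ‖Y‖ ≤ lam := by
  rw [← specNorm_eq_norm']
  apply ContinuousLinearMap.opNorm_le_bound _ hlam0
  intro z
  have hze : ‖(LinearMap.toContinuousLinearMap (toEuclideanLin Y)) z‖
      = ‖toEuclideanLin Y z‖ := rfl
  rw [hze]
  have key : ‖toEuclideanLin Y z‖^2 ≤ (lam * ‖z‖)^2 := by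
    rw [normTxsq_expand Y hY.1 z, mul_pow, normsq_expand Y hY.1 z, Finset.mul_sum]
    apply Finset.sum_le_sum
    intro j _
    have h1 := hY.eigenvalues_nonneg j
    have h2 := hmax j
    nlinarith [sq_nonneg (hY.1.eigenvectorBasis.repr z j), mul_le_mul h2 h2 h1 hlam0]
  have h0 : (0:ℝ) ≤ ‖toEuclideanLin Y z‖ := norm_nonneg _
  have h0' : (0:ℝ) ≤ lam * ‖z‖ := mul_nonneg hlam0 (norm_nonneg _)
  nlinarith

lemma inner_eq_dot (A : Matrix (Fin n) (Fin n) ℝ) (x : EuclideanSpace ℝ (Fin n)) :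
    (inner ℝ x (toEuclideanLin A x) : ℝ) = ⇑x ⬝ᵥ (A *ᵥ ⇑x) := by
  simp [toEuclideanLin_apply, PiLp.inner_apply, RCLike.inner_apply, dotProduct, mul_comm]

lemma herm_dot (Y : Matrix (Fin n) (Fin n) ℝ) (hH : Y.IsHermitian) (v w : Fin n → ℝ) (lam : ℝ)
    (hYv : Y *ᵥ v = lam • v) : v ⬝ᵥ (Y *ᵥ w) = lam * (v ⬝ᵥ w) := by
  have hT : Yᵀ = Y := by rw [← Matrix.conjTranspose_eq_transpose_of_trivial]; exact hH.eq
  rw [dotProduct_mulVec, ← mulVec_transpose, hT, hYv, smul_dotProduct, smul_eq_mul]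

end Stmt8Aux

open Stmt8Aux

/-- norm bound for PSD solutions of a Riccati-type inequality. -/
theorem stmt_8 {n : ℕ} (M D Y : Matrix (Fin n) (Fin n) ℝ)
    (hD : D.PosDef) (hY : Y.PosSemidef)
    (hineq : (-(Y * Mᵀ) - M * Y - Y * D * Y).PosSemidef) :
    specNorm Y ≤ 2 * specNorm M / lamMin D := by
  rcases Nat.eq_zero_or_pos n with hn0 | hnpos
  · subst hn0
    have hY0 : Y = 0 := Subsingleton.elim _ _
    have hM0 : M = 0 := Subsingleton.elim _ _
    rw [hY0, hM0, specNorm_eq_norm']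
    simp
  haveI : Nonempty (Fin n) := Fin.pos_iff_nonempty.mp hnpos
  -- spectral data of D
  have hDspec : spectrum ℝ D = Set.range hD.1.eigenvalues := hD.1.spectrum_real_eq_range_eigenvalues
  have hDfin : (spectrum ℝ D).Finite := D.finite_real_spectrum
  have hDne : (spectrum ℝ D).Nonempty := by
    rw [hDspec]; exact Set.range_nonempty _
  have hlmD_mem : lamMin D ∈ spectrum ℝ D := hDne.csInf_mem hDfin
  have hlmD_pos : 0 < lamMin D := by
    rw [hDspec] at hlmD_mem
    obtain ⟨j, hj⟩ := hlmD_mem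
    rw [← hj]; exact hD.eigenvalues_pos j
  have hlmD_le : ∀ j, lamMin D ≤ hD.1.eigenvalues j := fun j =>
    csInf_le hDfin.bddBelow (hD.1.eigenvalues_mem_spectrum_real j)
  -- top eigenvalue of Y
  obtain ⟨i₀, hi₀⟩ := Finite.exists_max hY.1.eigenvalues
  set lam : ℝ := hY.1.eigenvalues i₀ with hlamdef
  have hlam0 : 0 ≤ lam := hY.eigenvalues_nonneg i₀
  set x : EuclideanSpace ℝ (Fin n) := hY.1.eigenvectorBasis i₀ with hxdef
  have hx1 : ‖x‖ = 1 := hY.1.eigenvectorBasis.orthonormal.1 i₀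
  set v : Fin n → ℝ := ⇑x with hvdef
  have hYv : Y *ᵥ v = lam • v := hY.1.mulVec_eigenvectorBasis i₀
  have hvv : v ⬝ᵥ v = 1 := by
    have h := real_inner_self_eq_norm_sq x
    rw [hx1] at h
    simp only [PiLp.inner_apply, RCLike.inner_apply, conj_trivial, one_pow] at h
    simpa [dotProduct, hvdef, mul_comm] using h
  -- quadratic form inequality
  have hq := hineq.dotProduct_mulVec_nonneg v
  rw [star_trivial] at hq
  have hexpand : v ⬝ᵥ ((-(Y * Mᵀ) - M * Y - Y * D * Y) *ᵥ v)
      = -(lam * (v ⬝ᵥ (M *ᵥ v))) - lam * (v ⬝ᵥ (M *ᵥ v)) - lam * (lam * (v ⬝ᵥ (D *ᵥ v))) := by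
    rw [sub_mulVec, sub_mulVec, neg_mulVec, dotProduct_sub, dotProduct_sub, dotProduct_neg]
    congr 1
    · congr 1
      · -- v ⬝ᵥ (Y * Mᵀ) *ᵥ v = lam * (v ⬝ᵥ M *ᵥ v)
        rw [← mulVec_mulVec, herm_dot Y hY.1 v _ lam hYv,
          mulVec_transpose, dotProduct_comm, ← dotProduct_mulVec]
      · -- v ⬝ᵥ (M * Y) *ᵥ v = lam * (v ⬝ᵥ M *ᵥ v)
        rw [← mulVec_mulVec, hYv, mulVec_smul, dotProduct_smul, smul_eq_mul]
    · -- v ⬝ᵥ (Y * D * Y) *ᵥ v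
      rw [← mulVec_mulVec, hYv, mulVec_smul, dotProduct_smul, smul_eq_mul, ← mulVec_mulVec,
        herm_dot Y hY.1 v _ lam hYv, dotProduct_mulVec, ← mulVec_transpose,
        show Dᵀ = D by rw [← Matrix.conjTranspose_eq_transpose_of_trivial]; exact hD.1.eq]
  rw [hexpand] at hq
  -- bound on v ⬝ᵥ M *ᵥ v
  have hMbound : |v ⬝ᵥ (M *ᵥ v)| ≤ specNorm M := by
    rw [← inner_eq_dot]
    calc |(inner ℝ x (toEuclideanLin M x) : ℝ)| ≤ ‖x‖ * ‖toEuclideanLin M x‖ :=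
          abs_real_inner_le_norm _ _
      _ ≤ ‖x‖ * (specNorm M * ‖x‖) := by
          apply mul_le_mul_of_nonneg_left _ (norm_nonneg x)
          exact (LinearMap.toContinuousLinearMap (toEuclideanLin M)).le_opNorm x
      _ = specNorm M := by rw [hx1]; ring
  -- lower bound on v ⬝ᵥ D *ᵥ v
  have hDlow : lamMin D ≤ v ⬝ᵥ (D *ᵥ v) := by
    rw [← inner_eq_dot, inner_expand D hD.1 x]
    have h1 : ∑ j, lamMin D * (hD.1.eigenvectorBasis.repr x j)^2
        ≤ ∑ j, hD.1.eigenvalues j * (hD.1.eigenvectorBasis.repr x j)^2 := by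
      apply Finset.sum_le_sum
      intro j _
      exact mul_le_mul_of_nonneg_right (hlmD_le j) (sq_nonneg _)
    have h2 : ∑ j, lamMin D * (hD.1.eigenvectorBasis.repr x j)^2 = lamMin D := by
      rw [← Finset.mul_sum, ← normsq_expand D hD.1 x, hx1]; ring
    linarith
  -- main bound: lam * lamMin D ≤ 2 * specNorm M
  have hmain : lam * lamMin D ≤ 2 * specNorm M := by
    rcases eq_or_lt_of_le hlam0 with h0 | hpos
    · rw [← h0, zero_mul]
      have := abs_nonneg (v ⬝ᵥ (M *ᵥ v))
      linarith
    · have habs : -(specNorm M) ≤ v ⬝ᵥ (M *ᵥ v) := neg_le_of_abs_le hMbound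
      have hDl : lamMin D ≤ v ⬝ᵥ (D *ᵥ v) := hDlow
      -- hq : 0 ≤ -(lam*q) - lam*q - lam*(lam*d)
      nlinarith [mul_le_mul_of_nonneg_left hDl (le_of_lt (mul_pos hpos hpos))]
  -- conclude
  have hYnorm : specNorm Y ≤ lam := by
    rw [specNorm_eq_norm']
    exact norm_le_of_psd Y hY lam hlam0 hi₀
  have : lam ≤ 2 * specNorm M / lamMin D := by
    rw [le_div_iff₀ hlmD_pos]
    exact hmain
  linarith
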